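/- In a chart with a LLEE-witness, the loops-back-to relation is a total order on successors: if w ⇢ v1 and w ⇢ v2 then v1 ⇢ v2, or v1 = v2, or v2 ⇢ v1. -/

import Mathlib

/-- An entry/body-labeled finite chart: a rooted labelled transition system with
termination sink `tick` (√), start vertex `start`, and transitions carrying an
action from `A` together with a marking label in ℕ (label `0` marks body
transitions, positive labels mark entry transitions).  Every vertex other than
possibly `tick` is reachable from the start vertex. -/
structure LChart (V : Type) (A : Type) : Type where
  tick : V
  start : V
  Tr : V → A → ℕ → V → Prop
  tick_no_out : ∀ (a : A) (n : ℕ) (w : V), ¬ Tr tick a n w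
  start_ne_tick : start ≠ tick
  connected : ∀ v : V, v = tick ∨
    Relation.ReflTransGen (fun x y => ∃ (a : A) (n : ℕ), Tr x a n y) start v

namespace LChart

variable {V A : Type}

/-- Body transition step (marking label `0`). -/
def BStep (C : LChart V A) (x y : V) : Prop := ∃ a : A, C.Tr x a 0 y

/-- Entry transition step of level `α > 0`. -/
def EStep (C : LChart V A) (α : ℕ) (x y : V) : Prop := 0 < α ∧ ∃ a : A, C.Tr x a α y

/-- A transition step of any kind. -/
def AnyStep (C : LChart V A) (x y : V) : Prop := ∃ (a : A) (n : ℕ), C.Tr x a n y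

/-- There is an entry transition of level `α` departing from `v`. -/
def HasEntry (C : LChart V A) (v : V) (α : ℕ) : Prop :=
  0 < α ∧ ∃ (a : A) (w : V), C.Tr v a α w

/-- `v` descends in a loop of level `α` to `w`: there is a path from `v` to `w`
starting with an `α`-entry transition and continuing with body transitions, in
which all transition targets avoid `v`. -/
def Descends (C : LChart V A) (v : V) (α : ℕ) (w : V) : Prop :=
  ∃ u : V, C.EStep α v u ∧ u ≠ v ∧
    Relation.ReflTransGen (fun x y => C.BStep x y ∧ y ≠ v) u w

/-- `v` descends in a loop to `w` (at some level). -/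
def Desc (C : LChart V A) (v w : V) : Prop := ∃ α : ℕ, C.Descends v α w

/-- An infinite path from `v` in the loop subchart `C[v,α]`: it starts at `v`,
takes an `α`-entry transition whenever it is at `v`, and body transitions
otherwise. -/
def LoopSeq (C : LChart V A) (v : V) (α : ℕ) (f : ℕ → V) : Prop :=
  f 0 = v ∧ ∀ n : ℕ,
    (f n = v → C.EStep α (f n) (f (n + 1))) ∧ (f n ≠ v → C.BStep (f n) (f (n + 1)))

/-- The conditions (W1), (W2)(a) (the subchart `C[v,α]` is a loop chart, i.e.
(L1) an infinite path from `v` exists, (L2) every infinite path from `v`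
returns to `v` after a positive number of steps, (L3) √ is not a vertex of
`C[v,α]`), and (W2)(b) (layeredness) for an entry/body-labeling to be a
LLEE-witness. -/
structure IsLLEE (C : LChart V A) : Prop where
  w1 : ¬ ∃ f : ℕ → V, f 0 = C.start ∧ ∀ n : ℕ, C.BStep (f n) (f (n + 1))
  w2a_L1 : ∀ (v : V) (α : ℕ), C.HasEntry v α → ∃ f : ℕ → V, C.LoopSeq v α f
  w2a_L2 : ∀ (v : V) (α : ℕ), C.HasEntry v α →
    ∀ f : ℕ → V, C.LoopSeq v α f → ∃ n : ℕ, 0 < n ∧ f n = v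
  w2a_L3 : ∀ (v : V) (α : ℕ), ¬ C.Descends v α C.tick
  w2b : ∀ (v w : V) (α : ℕ), C.Descends v α w → ∀ β : ℕ, α ≤ β → ¬ C.HasEntry w β

/-- `u` and `v` lie in the same strongly connected component. -/
def SameSCC (C : LChart V A) (u v : V) : Prop :=
  Relation.ReflTransGen C.AnyStep u v ∧ Relation.ReflTransGen C.AnyStep v u

/-- `w` loops back to `v`: `v` descends in a loop to `w` and there is a nonempty
path of body transitions from `w` back to `v`. -/
def LoopsBack (C : LChart V A) (w v : V) : Prop :=
  C.Desc v w ∧ Relation.TransGen C.BStep w v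

/-- `w` directly loops back to `v`. -/
def DLoopsBack (C : LChart V A) (w v : V) : Prop :=
  C.LoopsBack w v ∧ ∀ u : V, C.LoopsBack w u → u = v ∨ C.LoopsBack v u

end LChart

private lemma firstHit_split {α : Type} {R : α → α → Prop} (P : α → Prop) {w z : α}
    (h : Relation.TransGen R w z) (hz : ¬ P z) :
    ∃ y x, Relation.ReflTransGen (fun a b => R a b ∧ P b) w y ∧ R y x ∧ ¬ P x ∧
      Relation.ReflTransGen R x z := by
  induction h using Relation.TransGen.head_induction_on with
  | single hr => exact ⟨_, z, Relation.ReflTransGen.refl, hr, hz, Relation.ReflTransGen.refl⟩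
  | @head a c hr ht IH =>
    by_cases hc : P c
    · obtain ⟨y, x, p, s, hx, q⟩ := IH
      exact ⟨y, x, Relation.ReflTransGen.head ⟨hr, hc⟩ p, s, hx, q⟩
    · exact ⟨_, _, Relation.ReflTransGen.refl, hr, hc, ht.to_reflTransGen⟩

/-- The loops-back-to relation is a total order on successors: if `w ⇢ v1` and
`w ⇢ v2` then `v1 ⇢ v2`, or `v1 = v2`, or `v2 ⇢ v1`. -/
theorem loopsBack_total_on_successors {V A : Type} [Finite V] (C : LChart V A)
    (h : C.IsLLEE) (w v1 v2 : V)
    (h1 : C.LoopsBack w v1) (h2 : C.LoopsBack w v2) :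
    C.LoopsBack v1 v2 ∨ v1 = v2 ∨ C.LoopsBack v2 v1 := by
  by_cases hv : v1 = v2
  · exact Or.inr (Or.inl hv)
  obtain ⟨⟨α1, u1, he1, hu1, hp1⟩, hb1⟩ := h1
  obtain ⟨⟨α2, u2, he2, hu2, hp2⟩, hb2⟩ := h2
  have rt_tg : ∀ {a b : V}, Relation.ReflTransGen C.BStep a b → a ≠ b →
      Relation.TransGen C.BStep a b := by
    intro a b hab hne
    rcases (Relation.reflTransGen_iff_eq_or_transGen).mp hab with heq | htg
    · exact absurd heq.symm hne
    · exact htg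
  have hE1 : C.HasEntry v1 α1 := ⟨he1.1, he1.2.choose, u1, he1.2.choose_spec⟩
  have hE2 : C.HasEntry v2 α2 := ⟨he2.1, he2.2.choose, u2, he2.2.choose_spec⟩
  set P : V → Prop := fun x => x ≠ v1 ∧ x ≠ v2 with hP
  obtain ⟨y, x, p, s, hx, q⟩ := firstHit_split P hb1 (by simp [hP])
  have hx' : x = v1 ∨ x = v2 := by
    by_contra hcon
    push_neg at hcon
    exact hx ⟨hcon.1, hcon.2⟩
  rcases hx' with hxx | hxx
  all_goals subst x
  · -- first hit of path w →bo+ v1 is v1 : get Descends v2 α2 v1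
    have D21 : C.Descends v2 α2 v1 := by
      refine ⟨u2, he2, hu2, hp2.trans ?_⟩
      exact (Relation.ReflTransGen.mono (p := fun x y => C.BStep x y ∧ y ≠ v2) (fun a b hab => ⟨hab.1, hab.2.2⟩) _ _ p).tail ⟨s, fun hh => hv hh⟩
    -- now decompose the path w →bo+ v2
    obtain ⟨y', x', p', s', hx2, q'⟩ := firstHit_split P hb2 (by simp [hP])
    have hx2' : x' = v1 ∨ x' = v2 := by
      by_contra hcon
      push_neg at hcon
      exact hx2 ⟨hcon.1, hcon.2⟩
    rcases hx2' with hxx2 | hxx2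
    all_goals subst x'
    · -- suffix gives v1 →bo+ v2, so v1 loops back to v2
      exact Or.inl ⟨⟨α2, D21⟩, rt_tg q' hv⟩
    · -- get Descends v1 α1 v2 as well: contradiction with layeredness
      have D12 : C.Descends v1 α1 v2 := by
        refine ⟨u1, he1, hu1, hp1.trans ?_⟩
        exact (Relation.ReflTransGen.mono (p := fun x y => C.BStep x y ∧ y ≠ v1) (fun a b hab => ⟨hab.1, hab.2.1⟩) _ _ p').tail ⟨s', fun hh => hv hh.symm⟩
      have n1 := h.w2b v1 v2 α1 D12 α2
      have n2 := h.w2b v2 v1 α2 D21 α1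
      rcases le_total α1 α2 with hle | hle
      · exact absurd hE2 (n1 hle)
      · exact absurd hE1 (n2 hle)
  · -- first hit of path w →bo+ v1 is v2 : get Descends v1 α1 v2 and v2 →bo+ v1
    have D12 : C.Descends v1 α1 v2 := by
      refine ⟨u1, he1, hu1, hp1.trans ?_⟩
      exact (Relation.ReflTransGen.mono (p := fun x y => C.BStep x y ∧ y ≠ v1) (fun a b hab => ⟨hab.1, hab.2.1⟩) _ _ p).tail ⟨s, fun hh => hv hh.symm⟩
    exact Or.inr (Or.inr ⟨⟨α1, D12⟩, rt_tg q (fun hh => hv hh.symm)⟩)
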